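/- Let $S_1, \dots, S_{\mathcal{K}}$ be nonempty subsets of $\{1,\dots,n\}$ with union $\{1,\dots,n\}$, and $\lambda_i > 0$ with $\sum_i \lambda_i = 1$. Suppose $\sum_{j \in J} \lambda_j \leq \frac{|\bigcup_{j \in J} S_j|}{n}$ for all $J \subseteq \{1,\dots,\mathcal{K}\}$. Then there exist nonnegative reals $(\alpha_{ij})$, $j \in S_i$, such that $\sum_{j \in S_i} \alpha_{ij} = \lambda_i$ for every $i$ and $\sum_{i : \ell \in S_i} \alpha_{i\ell} = \frac{1}{n}$ for every node $\ell$. -/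

import Mathlib

open Finset

/-- Dual inequality (layer-cake): the cut condition implies
`∑ c ≤ n * ∑ λᵢ * max_{Sᵢ} c` for every vector `c`. -/
lemma keyL (n K : ℕ) (hn : 0 < n) (S : Fin K → Finset (Fin n)) (hSne : ∀ i, (S i).Nonempty)
    (lam : Fin K → ℝ) (hlam : ∀ i, 0 ≤ lam i) (hsum : ∑ i, lam i = 1)
    (hcond : ∀ J : Finset (Fin K), ∑ j ∈ J, lam j ≤ (J.biUnion S).card / n)
    (c : Fin n → ℝ) :
    ∑ ℓ, c ℓ ≤ n * ∑ i, lam i * (S i).sup' (hSne i) c := by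
  classical
  obtain ⟨k, hk⟩ : ∃ k, (Finset.image c Finset.univ).card = k := ⟨_, rfl⟩
  induction k using Nat.strong_induction_on generalizing c with
  | _ k IH =>
  have hℓ0 : (⟨0, hn⟩ : Fin n) ∈ (Finset.univ : Finset (Fin n)) := Finset.mem_univ _
  have hVne : (Finset.image c Finset.univ).Nonempty := ⟨c ⟨0, hn⟩, Finset.mem_image_of_mem c hℓ0⟩
  set V := Finset.image c Finset.univ with hV
  by_cases hcard : V.card ≤ 1
  · -- constant case
    have hconst : ∀ ℓ : Fin n, c ℓ = c ⟨0, hn⟩ := by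
      intro ℓ
      exact Finset.card_le_one.mp hcard _ (Finset.mem_image_of_mem c (Finset.mem_univ ℓ)) _
        (Finset.mem_image_of_mem c hℓ0)
    have hsup : ∀ i, (S i).sup' (hSne i) c = c ⟨0, hn⟩ := by
      intro i
      obtain ⟨j, hj⟩ := hSne i
      refine le_antisymm (Finset.sup'_le _ _ fun j' _ => (hconst j').le) ?_
      exact Finset.le_sup'_of_le _ hj (hconst j).ge
    have h1 : ∑ ℓ, c ℓ = n * c ⟨0, hn⟩ := by
      rw [Finset.sum_congr rfl fun ℓ _ => hconst ℓ, Finset.sum_const, Finset.card_univ,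
        Fintype.card_fin, nsmul_eq_mul]
    have h2 : ∑ i, lam i * (S i).sup' (hSne i) c = c ⟨0, hn⟩ := by
      rw [Finset.sum_congr rfl fun i _ => by rw [hsup i]]
      rw [← Finset.sum_mul, hsum, one_mul]
    rw [h1, h2]
  · -- at least two values
    push_neg at hcard
    set m := V.min' hVne with hm
    have hWne : (V.erase m).Nonempty := by
      rw [← Finset.card_pos, Finset.card_erase_of_mem (V.min'_mem hVne)]
      omega
    set t := (V.erase m).min' hWne with ht
    have htV : t ∈ V.erase m := Finset.min'_mem _ _
    have hmt : m < t :=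
      lt_of_le_of_ne (V.min'_le _ (Finset.mem_of_mem_erase htV))
        (Ne.symm (Finset.ne_of_mem_erase htV))
    have hmle : ∀ ℓ, m ≤ c ℓ := fun ℓ => V.min'_le _ (Finset.mem_image_of_mem c (Finset.mem_univ ℓ))
    have hdich : ∀ ℓ, c ℓ = m ∨ t ≤ c ℓ := by
      intro ℓ
      by_cases h : c ℓ = m
      · exact Or.inl h
      · exact Or.inr ((V.erase m).min'_le _ (Finset.mem_erase.mpr
          ⟨h, Finset.mem_image_of_mem c (Finset.mem_univ ℓ)⟩))
    set c' : Fin n → ℝ := fun ℓ => max (c ℓ) t with hc'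
    have hc'eq : ∀ ℓ, c' ℓ = if c ℓ = m then t else c ℓ := by
      intro ℓ
      rcases hdich ℓ with h | h
      · simp [hc', h, hmt.le]
      · have : c ℓ ≠ m := by rcases eq_or_lt_of_le h with h' | h' <;> nlinarith
        simp [hc', this, max_eq_left h]
    -- image of c' is smaller
    have himg : Finset.image c' Finset.univ ⊆ V.erase m := by
      intro x hx
      obtain ⟨ℓ, _, rfl⟩ := Finset.mem_image.mp hx
      rcases hdich ℓ with h | h
      · rw [hc'eq ℓ, if_pos h]; exact htV
      · have hne : c ℓ ≠ m := by rcases eq_or_lt_of_le h with h' | h' <;> nlinarith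
        rw [hc'eq ℓ, if_neg hne]
        exact Finset.mem_erase.mpr ⟨hne, Finset.mem_image_of_mem c (Finset.mem_univ ℓ)⟩
    have hlt : (Finset.image c' Finset.univ).card < k := by
      calc (Finset.image c' Finset.univ).card ≤ (V.erase m).card := Finset.card_le_card himg
        _ = V.card - 1 := Finset.card_erase_of_mem (V.min'_mem hVne)
        _ < k := by omega
    have IH' := IH _ hlt c' rfl
    -- the set of minimal nodes
    set A : Finset (Fin n) := Finset.univ.filter (fun ℓ => c ℓ = m) with hA
    have hΔ1 : ∑ ℓ, c' ℓ = ∑ ℓ, c ℓ + (t - m) * A.card := by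
      have : ∑ ℓ, (c' ℓ - c ℓ) = (t - m) * A.card := by
        rw [Finset.sum_congr rfl (fun ℓ _ => show c' ℓ - c ℓ = if c ℓ = m then t - m else 0 by
          rw [hc'eq ℓ]; by_cases h : c ℓ = m <;> simp [h])]
        rw [← Finset.sum_filter, Finset.sum_const, nsmul_eq_mul, mul_comm]
      have h' : ∑ ℓ, (c' ℓ - c ℓ) = ∑ ℓ, c' ℓ - ∑ ℓ, c ℓ := Finset.sum_sub_distrib _ _
      linarith
    set M : Fin K → ℝ := fun i => (S i).sup' (hSne i) c with hM
    set M' : Fin K → ℝ := fun i => (S i).sup' (hSne i) c' with hM'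
    have hMm : ∀ i, m ≤ M i := by
      intro i
      simp only [hM]
      obtain ⟨j, hj⟩ := hSne i
      exact Finset.le_sup'_of_le _ hj (hmle j)
    have hM'eq : ∀ i, M' i = if M i = m then t else M i := by
      intro i
      simp only [hM', hM]
      obtain ⟨j0, hj0, hj0e⟩ := Finset.exists_mem_eq_sup' (hSne i) c
      by_cases h : M i = m
      · rw [if_pos h]
        refine le_antisymm (Finset.sup'_le _ _ fun j hj => ?_) ?_
        · have hcj : c j ≤ m := h ▸ (Finset.le_sup' c hj)
          have : c j = m := le_antisymm hcj (hmle j)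
          rw [hc'eq j, if_pos this]
        · exact Finset.le_sup'_of_le _ hj0 (by
            rw [hc'eq j0]
            have : c j0 = m := by rw [← hj0e]; exact h
            simp [this])
      · rw [if_neg h]
        have htM : t ≤ (S i).sup' (hSne i) c := by
          rcases hdich j0 with h' | h'
          · exact absurd (hj0e.trans h') h
          · rw [hj0e]; exact h'
        refine le_antisymm (Finset.sup'_le _ _ fun j hj => ?_) ?_
        · rw [hc'eq j]
          by_cases h' : c j = m
          · simpa [h'] using htM
          · simp only [h', if_false]; exact Finset.le_sup' c hj
        · exact Finset.le_sup'_of_le _ hj0 (by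
            rw [hc'eq j0, ← hj0e]
            split
            · exact absurd (by assumption) h
            · exact le_rfl)
    set J : Finset (Fin K) := Finset.univ.filter (fun i => M i = m) with hJdef
    have hΔ2 : ∑ i, lam i * M' i = ∑ i, lam i * M i + (t - m) * ∑ i ∈ J, lam i := by
      have : ∑ i, (lam i * M' i - lam i * M i) = ∑ i ∈ J, lam i * (t - m) := by
        rw [Finset.sum_congr rfl (fun i _ =>
          show lam i * M' i - lam i * M i = if M i = m then lam i * (t - m) else 0 by
            rw [hM'eq i]; by_cases h : M i = m <;> simp [h] <;> ring)]
        rw [← Finset.sum_filter]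
      have h' : ∑ i, (lam i * M' i - lam i * M i) = ∑ i, lam i * M' i - ∑ i, lam i * M i :=
        Finset.sum_sub_distrib _ _
      rw [← Finset.sum_mul] at this
      linarith
    -- cut condition on J
    have hsub : J.biUnion S ⊆ A := by
      intro ℓ hℓ
      obtain ⟨i, hi, hℓi⟩ := Finset.mem_biUnion.mp hℓ
      have hMi : M i = m := (Finset.mem_filter.mp hi).2
      have h1 : c ℓ ≤ m := by rw [← hMi, hM]; exact Finset.le_sup' c hℓi
      exact Finset.mem_filter.mpr ⟨Finset.mem_univ _, le_antisymm h1 (hmle ℓ)⟩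
    have hn' : (0 : ℝ) < n := by exact_mod_cast hn
    have hJcard : ∑ i ∈ J, lam i ≤ (A.card : ℝ) / n := by
      refine (hcond J).trans ?_
      have hc : ((J.biUnion S).card : ℝ) ≤ (A.card : ℝ) := by
        exact_mod_cast Finset.card_le_card hsub
      exact div_le_div_of_nonneg_right hc hn'.le
    have hJ' : (∑ i ∈ J, lam i) * n ≤ (A.card : ℝ) := by
      rw [← le_div_iff₀ hn']; exact hJcard
    have htm : (0 : ℝ) ≤ t - m := by linarith
    nlinarith [mul_le_mul_of_nonneg_left hJ' htm, IH']

theorem stmt_9 (n K : ℕ) (hn : 0 < n)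
    (S : Fin K → Finset (Fin n)) (hSne : ∀ i, (S i).Nonempty)
    (hcover : ∀ ℓ : Fin n, ∃ i, ℓ ∈ S i)
    (lam : Fin K → ℝ) (hlam : ∀ i, 0 < lam i) (hsum : ∑ i, lam i = 1)
    (hcond : ∀ J : Finset (Fin K), ∑ j ∈ J, lam j ≤ (J.biUnion S).card / n) :
    ∃ α : Fin K → Fin n → ℝ,
      (∀ i, ∀ j ∈ S i, 0 ≤ α i j) ∧
      (∀ i, ∑ j ∈ S i, α i j = lam i) ∧
      (∀ ℓ : Fin n, ∑ i, (if ℓ ∈ S i then α i ℓ else 0) = 1 / n) := by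
  classical
  have hn' : (0 : ℝ) < n := by exact_mod_cast hn
  have hlam0 : ∀ i, 0 ≤ lam i := fun i => (hlam i).le
  have hlam1 : ∀ i, lam i ≤ 1 := by
    intro i
    calc lam i ≤ ∑ j, lam j :=
          Finset.single_le_sum (f := lam) (fun j _ => (hlam j).le) (Finset.mem_univ i)
      _ = 1 := hsum
  -- the feasible polytope and its image
  set A : Set (Fin K → Fin n → ℝ) :=
    {α | (∀ i j, 0 ≤ α i j) ∧ (∀ i j, j ∉ S i → α i j = 0) ∧ ∀ i, ∑ j ∈ S i, α i j = lam i}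
    with hAdef
  let T : (Fin K → Fin n → ℝ) →ₗ[ℝ] (Fin n → ℝ) :=
    { toFun := fun α ℓ => ∑ i, α i ℓ
      map_add' := fun α β => by funext ℓ; simp [Finset.sum_add_distrib]
      map_smul' := fun r α => by funext ℓ; simp [Finset.mul_sum] }
  set D : Set (Fin n → ℝ) := T '' A with hDdef
  -- convexity
  have hAconv : Convex ℝ A := by
    intro α hα β hβ a b ha hb hab
    refine ⟨fun i j => add_nonneg (mul_nonneg ha (hα.1 i j)) (mul_nonneg hb (hβ.1 i j)),
      fun i j hj => by simp [hα.2.1 i j hj, hβ.2.1 i j hj], fun i => ?_⟩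
    simp only [Pi.add_apply, Pi.smul_apply, smul_eq_mul]
    rw [Finset.sum_add_distrib, ← Finset.mul_sum, ← Finset.mul_sum, hα.2.2 i, hβ.2.2 i]
    linear_combination lam i * hab
  have hDconv : Convex ℝ D := hAconv.linear_image T
  -- compactness
  have hAsub : A ⊆ Set.pi Set.univ fun _ : Fin K => Set.pi Set.univ fun _ : Fin n =>
      Set.Icc (0 : ℝ) 1 := by
    intro α hα i _ j _
    refine ⟨hα.1 i j, ?_⟩
    by_cases hj : j ∈ S i
    · calc α i j ≤ ∑ j' ∈ S i, α i j' :=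
            Finset.single_le_sum (fun j' _ => hα.1 i j') hj
        _ = lam i := hα.2.2 i
        _ ≤ 1 := hlam1 i
    · rw [hα.2.1 i j hj]; exact zero_le_one
  have hbox : IsCompact (Set.pi Set.univ fun _ : Fin K => Set.pi Set.univ fun _ : Fin n =>
      Set.Icc (0 : ℝ) 1) :=
    isCompact_univ_pi fun _ => isCompact_univ_pi fun _ => isCompact_Icc
  have hcont : ∀ (i : Fin K) (j : Fin n), Continuous fun α : Fin K → Fin n → ℝ => α i j :=
    fun i j => (continuous_apply j).comp (continuous_apply i)
  have hAclosed : IsClosed A := by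
    have hAeq : A = (⋂ i, ⋂ j, {α : Fin K → Fin n → ℝ | 0 ≤ α i j}) ∩
        ((⋂ i, ⋂ j, {α : Fin K → Fin n → ℝ | j ∉ S i → α i j = 0}) ∩
         (⋂ i, {α : Fin K → Fin n → ℝ | ∑ j ∈ S i, α i j = lam i})) := by
      ext α
      simp only [hAdef, Set.mem_setOf_eq, Set.mem_inter_iff, Set.mem_iInter]
    rw [hAeq]
    refine IsClosed.inter ?_ (IsClosed.inter ?_ ?_)
    · exact isClosed_iInter fun i => isClosed_iInter fun j =>
        isClosed_le continuous_const (hcont i j)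
    · refine isClosed_iInter fun i => isClosed_iInter fun j => ?_
      by_cases hj : j ∈ S i
      · simp only [hj, not_true_eq_false, false_implies]
        exact isClosed_univ
      · simp only [hj, not_false_eq_true, true_implies]
        exact isClosed_eq (hcont i j) continuous_const
    · exact isClosed_iInter fun i =>
        isClosed_eq (continuous_finset_sum _ fun j _ => hcont i j) continuous_const
  have hAcomp : IsCompact A := hbox.of_isClosed_subset hAclosed hAsub
  have hTcont : Continuous T := T.continuous_of_finiteDimensional
  have hDclosed : IsClosed D := (hAcomp.image hTcont).isClosed
  set b : Fin n → ℝ := fun _ => 1 / n with hbdef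
  suffices hb : b ∈ D by
    obtain ⟨α, hαA, hTα⟩ := hb
    refine ⟨α, fun i j _ => hαA.1 i j, hαA.2.2, fun ℓ => ?_⟩
    have h1 : ∑ i, (if ℓ ∈ S i then α i ℓ else 0) = ∑ i, α i ℓ :=
      Finset.sum_congr rfl fun i _ => by
        by_cases h : ℓ ∈ S i
        · simp [h]
        · simp [h, hαA.2.1 i ℓ h]
    rw [h1]
    exact congrFun hTα ℓ
  by_contra hb
  obtain ⟨f, u, hfD, hub⟩ := geometric_hahn_banach_closed_point hDconv hDclosed hb
  set c : Fin n → ℝ := fun ℓ => f (Pi.single ℓ 1) with hcdef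
  have hfval : ∀ d : Fin n → ℝ, f d = ∑ ℓ, d ℓ * c ℓ := by
    intro d
    conv_lhs => rw [← Finset.univ_sum_single d]
    rw [map_sum]
    refine Finset.sum_congr rfl fun ℓ _ => ?_
    have hps : Pi.single ℓ (d ℓ) = d ℓ • (Pi.single ℓ 1 : Fin n → ℝ) := by
      ext j
      by_cases h : j = ℓ <;> simp [Pi.single_apply, h]
    rw [hps, map_smul, smul_eq_mul]
  -- argmax selection
  have hmax : ∀ i, ∃ j, j ∈ S i ∧ (S i).sup' (hSne i) c = c j :=
    fun i => Finset.exists_mem_eq_sup' (hSne i) c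
  choose j0 hj0mem hj0eq using hmax
  set αstar : Fin K → Fin n → ℝ := fun i j => if j = j0 i then lam i else 0 with hαstar
  have hαstarA : αstar ∈ A := by
    refine ⟨fun i j => ?_, fun i j hj => ?_, fun i => ?_⟩
    · show (0:ℝ) ≤ if j = j0 i then lam i else 0
      split
      · exact hlam0 i
      · exact le_rfl
    · show (if j = j0 i then lam i else 0 : ℝ) = 0
      refine if_neg fun h => hj ?_
      rw [h]; exact hj0mem i
    · show ∑ j ∈ S i, (if j = j0 i then lam i else 0) = lam i
      simp [Finset.sum_ite_eq', hj0mem i]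
  have h1 : f (T αstar) = ∑ i, lam i * c (j0 i) := by
    rw [hfval]
    have hterm : ∀ ℓ, (T αstar) ℓ * c ℓ = ∑ i, (if ℓ = j0 i then lam i * c ℓ else 0) := by
      intro ℓ
      show (∑ i, (if ℓ = j0 i then lam i else 0)) * c ℓ = _
      rw [Finset.sum_mul]
      exact Finset.sum_congr rfl fun i _ => by split <;> simp
    rw [Finset.sum_congr rfl fun ℓ _ => hterm ℓ, Finset.sum_comm]
    exact Finset.sum_congr rfl fun i _ => by simp
  have hlt1 : ∑ i, lam i * c (j0 i) < u := by
    rw [← h1]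
    exact hfD _ ⟨αstar, hαstarA, rfl⟩
  have hfb : (n : ℝ) * f b = ∑ ℓ, c ℓ := by
    rw [hfval]
    show (n : ℝ) * ∑ ℓ, (1 / n) * c ℓ = _
    rw [← Finset.mul_sum]
    field_simp
  have hkey : ∑ ℓ, c ℓ ≤ n * ∑ i, lam i * c (j0 i) := by
    have hthis := keyL n K hn S hSne lam hlam0 hsum hcond c
    have hre : ∑ i, lam i * (S i).sup' (hSne i) c = ∑ i, lam i * c (j0 i) :=
      Finset.sum_congr rfl fun i _ => by rw [hj0eq i]
    rwa [hre] at hthis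
  have h2 : (n : ℝ) * ∑ i, lam i * c (j0 i) < n * u := by
    exact mul_lt_mul_of_pos_left hlt1 hn'
  have h3 : (n : ℝ) * u < n * f b := mul_lt_mul_of_pos_left hub hn'
  linarith
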